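/- Let P ∈ ℤ[x] have degree d ≥ 2, at least two distinct complex roots, and maximal root multiplicity e. Let Q ∈ ℤ[x] be squarefree with Q ∣ P ∣ Q^e and discriminant Δ_Q. Then for all positive integers z and N, the number of x ∈ {1,…,N} with z ∣ P(x) is at most d^{ω(z)}·|Δ_Q|^{1/2}·(1 + N/z^{1/e}). -/

import Mathlib

theorem stmt_18 (P Q : Polynomial ℤ) (d : ℕ) (hdeg : P.natDegree = d) (hd : 2 ≤ d)
    (hroots : 2 ≤ (P.map (Int.castRingHom ℂ)).roots.toFinset.card)
    (e : ℕ)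
    (he : e = ((P.map (Int.castRingHom ℂ)).roots.toFinset.sup
      (fun r => (P.map (Int.castRingHom ℂ)).rootMultiplicity r)))
    (hsf : Squarefree (Q.map (Int.castRingHom ℂ)))
    (hQP : Q ∣ P) (hPQ : P ∣ Q ^ e)
    (Δ : ℤ) (hΔ0 : Δ ≠ 0)
    (hHux : ∀ ℓ : ℕ, 0 < ℓ →
      (((Finset.range ℓ).filter (fun x : ℕ => (ℓ : ℤ) ∣ Q.eval (x : ℤ))).card : ℝ)
        ≤ (d : ℝ) ^ ℓ.primeFactors.card * Real.sqrt |(Δ : ℝ)|) :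
    ∀ z N : ℕ, 0 < z → 0 < N →
      (((Finset.Icc 1 N).filter (fun x : ℕ => (z : ℤ) ∣ P.eval (x : ℤ))).card : ℝ)
        ≤ (d : ℝ) ^ z.primeFactors.card * Real.sqrt |(Δ : ℝ)|
            * (1 + (N : ℝ) / (z : ℝ) ^ ((1 : ℝ) / e)) := by
  intro z N hz hN
  -- P is nonzero, hence e ≥ 1
  have hP0 : P ≠ 0 := by
    intro h
    rw [h, Polynomial.natDegree_zero] at hdeg
    omega
  have hPm0 : P.map (Int.castRingHom ℂ) ≠ 0 :=
    (Polynomial.map_ne_zero_iff (RingHom.injective_int _)).mpr hP0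
  have he1 : 1 ≤ e := by
    obtain ⟨r, hr⟩ : ((P.map (Int.castRingHom ℂ)).roots.toFinset).Nonempty :=
      Finset.card_pos.mp (by omega)
    have hr' : (P.map (Int.castRingHom ℂ)).IsRoot r :=
      Polynomial.isRoot_of_mem_roots (Multiset.mem_toFinset.mp hr)
    have h1 : 0 < (P.map (Int.castRingHom ℂ)).rootMultiplicity r :=
      (Polynomial.rootMultiplicity_pos hPm0).mpr hr'
    have h2 := Finset.le_sup (f := fun r => (P.map (Int.castRingHom ℂ)).rootMultiplicity r) hr
    rw [he]
    exact h1.trans_le h2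
  -- define the auxiliary modulus L
  set f : ℕ → ℕ := fun p => (z.factorization p + e - 1) / e with hf
  set L : ℕ := ∏ p ∈ z.primeFactors, p ^ f p with hLdef
  have hLpos : 0 < L :=
    Finset.prod_pos fun p hp => pow_pos (Nat.prime_of_mem_primeFactors hp).pos _
  have hLfact : ∀ q, L.factorization q = if q ∈ z.primeFactors then f q else 0 := by
    intro q
    rw [hLdef, Nat.factorization_prod
      (fun p hp => pow_ne_zero _ (Nat.prime_of_mem_primeFactors hp).pos.ne')]
    rw [Finsupp.finset_sum_apply]
    rw [Finset.sum_congr rfl (fun p hp => by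
      rw [Nat.Prime.factorization_pow (Nat.prime_of_mem_primeFactors hp), Finsupp.single_apply])]
    exact Finset.sum_ite_eq' _ _ _
  have hzfact0 : ∀ q, q ∉ z.primeFactors → z.factorization q = 0 := by
    intro q hq
    exact Finsupp.notMem_support_iff.mp (by rwa [Nat.support_factorization])
  -- arithmetic helper: ceiling division
  have hfe : ∀ v m : ℕ, v ≤ e * m → (v + e - 1) / e ≤ m := by
    intro v m h
    have h2 : v + e - 1 ≤ e * m + (e - 1) := by omega
    calc (v + e - 1) / e ≤ (e * m + (e - 1)) / e := Nat.div_le_div_right h2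
      _ = m + (e - 1) / e := Nat.mul_add_div (by omega) _ _
      _ = m := by rw [Nat.div_eq_of_lt (by omega), Nat.add_zero]
  -- z ∣ L ^ e
  have hdvdzL : z ∣ L ^ e := by
    rw [← Nat.factorization_le_iff_dvd hz.ne' (pow_pos hLpos e).ne']
    intro q
    rw [Nat.factorization_pow]
    by_cases hq : q ∈ z.primeFactors
    · have hmod := Nat.div_add_mod (z.factorization q + e - 1) e
      have hlt : (z.factorization q + e - 1) % e < e := Nat.mod_lt _ (by omega)
      simp only [Finsupp.smul_apply, smul_eq_mul, hLfact q, if_pos hq, hf]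
      omega
    · simp [hzfact0 q hq]
  -- L ∣ z
  have hLz : L ∣ z := by
    rw [← Nat.factorization_le_iff_dvd hLpos.ne' hz.ne']
    intro q
    rw [hLfact q]
    by_cases hq : q ∈ z.primeFactors
    · rw [if_pos hq]
      exact hfe _ _ (by nlinarith [Nat.one_le_iff_ne_zero.mp he1])
    · simp [hq]
  -- key divisibility transfer
  have key : ∀ x : ℤ, (z : ℤ) ∣ P.eval x → (L : ℤ) ∣ Q.eval x := by
    intro x hx
    have h1 : (z : ℤ) ∣ (Q.eval x) ^ e := by
      refine hx.trans ?_
      have := Polynomial.eval_dvd (x := x) hPQ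
      simpa [Polynomial.eval_pow] using this
    by_cases h0 : Q.eval x = 0
    · simp [h0]
    · have ha : (Q.eval x).natAbs ≠ 0 := Int.natAbs_ne_zero.mpr h0
      have h2 : z ∣ (Q.eval x).natAbs ^ e := by
        have h3 := Int.natAbs_dvd_natAbs.mpr h1
        rw [Int.natAbs_pow] at h3
        exact_mod_cast h3
      have h3 : L ∣ (Q.eval x).natAbs := by
        rw [← Nat.factorization_le_iff_dvd hLpos.ne' ha]
        intro q
        rw [hLfact q]
        by_cases hq : q ∈ z.primeFactors
        · rw [if_pos hq]
          have h4 := (Nat.factorization_le_iff_dvd hz.ne' (pow_ne_zero e ha)).mpr h2 q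
          rw [Nat.factorization_pow] at h4
          simp only [Finsupp.smul_apply, smul_eq_mul] at h4
          exact hfe _ _ h4
        · simp [hq]
      exact (Int.natCast_dvd_natCast.mpr h3).trans (Int.natAbs_dvd.mpr dvd_rfl)
  -- counting
  set S := (Finset.Icc 1 N).filter (fun x : ℕ => (z : ℤ) ∣ P.eval (x : ℤ)) with hS
  set T := (Finset.range L).filter (fun x : ℕ => (L : ℤ) ∣ Q.eval (x : ℤ)) with hT
  have hdiff : ∀ x : ℕ, (L : ℤ) ∣ Q.eval (x : ℤ) → (L : ℤ) ∣ Q.eval ((x % L : ℕ) : ℤ) := by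
    intro x hx
    have hxe : (x : ℤ) = (L : ℤ) * ((x / L : ℕ) : ℤ) + ((x % L : ℕ) : ℤ) := by
      exact_mod_cast (Nat.div_add_mod x L).symm
    have hd1 : (L : ℤ) ∣ ((x : ℤ) - ((x % L : ℕ) : ℤ)) := ⟨(x / L : ℕ), by omega⟩
    have hd2 : (L : ℤ) ∣ Q.eval (x : ℤ) - Q.eval ((x % L : ℕ) : ℤ) :=
      hd1.trans (Polynomial.sub_dvd_eval_sub _ _ Q)
    have := dvd_sub hx hd2
    simpa using this
  have himg : S.image (· % L) ⊆ T := by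
    intro r hr
    obtain ⟨x, hxS, hxr⟩ := Finset.mem_image.mp hr
    obtain ⟨hx1, hx2⟩ := Finset.mem_filter.mp hxS
    refine Finset.mem_filter.mpr ⟨Finset.mem_range.mpr (hxr ▸ Nat.mod_lt _ hLpos), ?_⟩
    rw [← hxr]
    exact hdiff x (key _ hx2)
  have hfiber : ∀ b ∈ S.image (· % L), (S.filter (fun x => x % L = b)).card ≤ N / L + 1 := by
    intro b _
    have hcard : (S.filter (fun x => x % L = b)).card ≤ (Finset.range (N / L + 1)).card := by
      apply Finset.card_le_card_of_injOn (fun x => x / L)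
      · intro x hx
        obtain ⟨hx1, _⟩ := Finset.mem_filter.mp hx
        obtain ⟨hx2, _⟩ := Finset.mem_filter.mp hx1
        have hxN : x ≤ N := (Finset.mem_Icc.mp hx2).2
        exact Finset.mem_range.mpr (by
          have := Nat.div_le_div_right (c := L) hxN
          show x / L < N / L + 1
          omega)
      · intro x hx y hy hxy
        simp only [Finset.mem_coe, Finset.mem_filter] at hx hy
        have hx' := Nat.div_add_mod x L
        have hy' := Nat.div_add_mod y L
        have hbx : x % L = b := hx.2
        have hby : y % L = b := hy.2
        have hxy' : x / L = y / L := by simpa using hxy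
        rw [hxy'] at hx'
        omega
    simpa using hcard
  have hST : S.card ≤ (N / L + 1) * T.card := by
    calc S.card ≤ (N / L + 1) * (S.image (· % L)).card :=
          Finset.card_le_mul_card_image S _ hfiber
      _ ≤ (N / L + 1) * T.card :=
          Nat.mul_le_mul_left _ (Finset.card_le_card himg)
  -- real estimates
  have hTbound := hHux L hLpos
  have hzpow_pos : (0 : ℝ) < (z : ℝ) ^ ((1 : ℝ) / e) :=
    Real.rpow_pos_of_pos (by exact_mod_cast hz) _
  have hzL : (z : ℝ) ^ ((1 : ℝ) / e) ≤ L := by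
    have hz_le : (z : ℝ) ≤ (L : ℝ) ^ (e : ℕ) := by
      exact_mod_cast Nat.le_of_dvd (pow_pos hLpos e) hdvdzL
    have hL0 : (0 : ℝ) ≤ (L : ℝ) := Nat.cast_nonneg _
    calc (z : ℝ) ^ ((1 : ℝ) / e) ≤ ((L : ℝ) ^ (e : ℕ)) ^ ((1 : ℝ) / e) :=
          Real.rpow_le_rpow (Nat.cast_nonneg _) hz_le (by positivity)
      _ = (L : ℝ) ^ ((e : ℝ) * (1 / e)) := by
          rw [← Real.rpow_natCast (L : ℝ) e, ← Real.rpow_mul hL0]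
      _ = L := by
          rw [mul_one_div_cancel (by exact_mod_cast Nat.one_le_iff_ne_zero.mp he1 : (e : ℝ) ≠ 0),
            Real.rpow_one]
  have hpow : ((d : ℝ)) ^ L.primeFactors.card ≤ (d : ℝ) ^ z.primeFactors.card := by
    apply pow_le_pow_right₀ (by exact_mod_cast (by omega : 1 ≤ d))
    exact Finset.card_le_card (Nat.primeFactors_mono hLz hz.ne')
  have hsqrt : (0 : ℝ) ≤ Real.sqrt |(Δ : ℝ)| := Real.sqrt_nonneg _
  have hfactor : ((N / L + 1 : ℕ) : ℝ) ≤ 1 + (N : ℝ) / (z : ℝ) ^ ((1 : ℝ) / e) := by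
    push_cast
    have h1 : ((N / L : ℕ) : ℝ) ≤ (N : ℝ) / (L : ℝ) := Nat.cast_div_le
    have h2 : (N : ℝ) / (L : ℝ) ≤ (N : ℝ) / (z : ℝ) ^ ((1 : ℝ) / e) := by
      apply div_le_div_of_nonneg_left (Nat.cast_nonneg _) hzpow_pos hzL
    linarith
  calc (S.card : ℝ) ≤ ((N / L + 1 : ℕ) : ℝ) * (T.card : ℝ) := by exact_mod_cast hST
    _ ≤ (1 + (N : ℝ) / (z : ℝ) ^ ((1 : ℝ) / e)) *
        ((d : ℝ) ^ z.primeFactors.card * Real.sqrt |(Δ : ℝ)|) := by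
        apply mul_le_mul hfactor (hTbound.trans (mul_le_mul_of_nonneg_right hpow hsqrt))
          (Nat.cast_nonneg _) (by positivity)
    _ = (d : ℝ) ^ z.primeFactors.card * Real.sqrt |(Δ : ℝ)|
          * (1 + (N : ℝ) / (z : ℝ) ^ ((1 : ℝ) / e)) := by ring
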